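/- Let b > 0, and for each pair 1 ≤ i < j ≤ n with b_{ij} > 0 let b_{ij} ≥ 0 be given. Let Δ ⊂ ℝ^{n−1} be a regular simplex with n vertices and side length b, and for each pair i < j with b_{ij} > 0 let Δ_{ij} ⊂ ℝ^{n−2} be a regular simplex with n−1 vertices and side length b_{ij}. Then in the Cartesian product X = Δ × ∏_{i<j, b_{ij}>0} Δ_{ij} there exist points z_1, …, z_n such that the projection of (z_1, …, z_n) onto the Δ-coordinate is a bijection onto the n vertices of Δ, and for every s ≠ t one has ‖z_s − z_t‖² = b² + (∑_{1 ≤ i < j ≤ n} b_{ij}²) − b_{st}²; moreover the set {z_1, …, z_n} is affinely independent. -/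

import Mathlib

open scoped Classical

noncomputable section

/-- The `j`-th vertex of a regular `m`-gon in the Euclidean plane with center `c`,
circumradius `r` and angle `θ`. -/
def polygonVertex (c : EuclideanSpace ℝ (Fin 2)) (r θ : ℝ) (m j : ℕ) :
    EuclideanSpace ℝ (Fin 2) :=
  (WithLp.equiv 2 (Fin 2 → ℝ)).symm
    ![c 0 + r * Real.cos (2 * Real.pi * j / m + θ),
      c 1 + r * Real.sin (2 * Real.pi * j / m + θ)]

/-- `T` is (the vertex set of) a regular `m`-gon of circumradius `r` in the plane. -/
def IsRegularPolygon (m : ℕ) (r : ℝ) (T : Set (EuclideanSpace ℝ (Fin 2))) : Prop :=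
  2 ≤ m ∧ 0 < r ∧
    ∃ (c : EuclideanSpace ℝ (Fin 2)) (θ : ℝ),
      T = {p | ∃ j < m, p = polygonVertex c r θ m j}

/-- The Cartesian product of `n` planar sets, viewed inside `ℝ^{2n}`. -/
def toriProduct {n : ℕ} (T : Fin n → Set (EuclideanSpace ℝ (Fin 2))) :
    Set (EuclideanSpace ℝ (Fin n × Fin 2)) :=
  {x | ∀ i : Fin n, ((WithLp.equiv 2 (Fin 2 → ℝ)).symm fun j => x (i, j)) ∈ T i}


/-- Equidistant points are affinely independent. -/
theorem affineIndependent_of_equidist {E : Type*} [NormedAddCommGroup E]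
    [InnerProductSpace ℝ E] {m : ℕ} (v : Fin m → E) {b : ℝ} (hb : 0 < b)
    (hv : ∀ s t, s ≠ t → dist (v s) (v t) = b) : AffineIndependent ℝ v := by
  match m, v, hv with
  | 0, v, hv => exact affineIndependent_of_subsingleton ℝ v
  | (m+1), v, hv =>
    rw [affineIndependent_iff_linearIndependent_vsub ℝ v 0, Fintype.linearIndependent_iff]
    intro gc hgc
    set u : {x : Fin (m+1) // x ≠ 0} → E := fun i => v i -ᵥ v (0 : Fin (m+1)) with hu
    have hnorm : ∀ i : {x : Fin (m+1) // x ≠ 0}, ‖u i‖ = b := by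
      intro i
      rw [hu]
      simp only [vsub_eq_sub, ← dist_eq_norm]
      exact hv _ _ i.2
    have hinner : ∀ i j : {x : Fin (m+1) // x ≠ 0},
        (inner ℝ (u i) (u j) : ℝ) = b ^ 2 / 2 + (if i = j then b ^ 2 / 2 else 0) := by
      intro i j
      by_cases hij : i = j
      · subst hij
        rw [real_inner_self_eq_norm_sq, hnorm, if_pos rfl]; ring
      · have h3 : ‖u i - u j‖ = b := by
          rw [hu]
          simp only [vsub_eq_sub, sub_sub_sub_cancel_right, ← dist_eq_norm]
          exact hv _ _ (Subtype.coe_injective.ne hij)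
        have h4 := norm_sub_sq_real (u i) (u j)
        rw [h3, hnorm, hnorm, if_neg hij] at *
        linarith
    have h0 : (inner ℝ (∑ i, gc i • u i) (∑ j, gc j • u j) : ℝ) = 0 := by rw [hgc]; simp
    rw [sum_inner] at h0
    simp_rw [inner_sum, real_inner_smul_left, real_inner_smul_right, hinner] at h0
    have hexp : ∀ i, ∑ j, gc i * (gc j * (b ^ 2 / 2 + if i = j then b ^ 2 / 2 else 0))
        = (∑ j, gc i * gc j) * (b ^ 2 / 2) + gc i * gc i * (b ^ 2 / 2) := by
      intro i
      have h1 : ∀ j, gc i * (gc j * (b ^ 2 / 2 + if i = j then b ^ 2 / 2 else 0))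
          = gc i * gc j * (b ^ 2 / 2) + (if i = j then gc i * gc j * (b ^ 2 / 2) else 0) := by
        intro j; split_ifs <;> ring
      rw [Finset.sum_congr rfl fun j _ => h1 j, Finset.sum_add_distrib,
        Finset.sum_ite_eq Finset.univ i, if_pos (Finset.mem_univ i), Finset.sum_mul]
    rw [Finset.sum_congr rfl fun i _ => hexp i, Finset.sum_add_distrib,
      ← Finset.sum_mul, ← Finset.sum_mul] at h0
    simp_rw [← Finset.mul_sum] at h0
    rw [← Finset.sum_mul] at h0
    have hS : (0:ℝ) ≤ (∑ i, gc i) * (∑ j, gc j) := mul_self_nonneg _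
    have hQ : (0:ℝ) ≤ ∑ i, gc i * gc i :=
      Finset.sum_nonneg fun i _ => mul_self_nonneg _
    have hb2 : (0:ℝ) < b ^ 2 / 2 := by positivity
    have hQ0 : ∑ i, gc i * gc i = 0 := by nlinarith
    intro i
    have := (Finset.sum_eq_zero_iff_of_nonneg fun i _ => mul_self_nonneg (gc i)).mp hQ0 i
      (Finset.mem_univ i)
    exact mul_self_eq_zero.mp this

/-- Collapse `Fin n` onto `Fin (n-1)` identifying exactly `i` and `j`. -/
def collapseIdx {n : ℕ} (i j : Fin n) (hij : i < j) (s : Fin n) : Fin (n - 1) :=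
  ⟨if s = j then (i : ℕ) else if (s : ℕ) < (j : ℕ) then (s : ℕ) else (s : ℕ) - 1, by
    have h1 := i.isLt; have h2 := j.isLt; have h3 := s.isLt
    have h4 : (i : ℕ) < (j : ℕ) := hij
    split_ifs <;> omega⟩

theorem collapseIdx_eq_iff {n : ℕ} (i j : Fin n) (hij : i < j) (s t : Fin n) (hst : s ≠ t) :
    collapseIdx i j hij s = collapseIdx i j hij t ↔ (s = i ∧ t = j) ∨ (s = j ∧ t = i) := by
  have h1 := i.isLt; have h2 := j.isLt; have h3 := s.isLt; have h4 := t.isLt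
  have h5 : (i : ℕ) < (j : ℕ) := hij
  have h6 : (s : ℕ) ≠ (t : ℕ) := fun h => hst (Fin.ext h)
  simp only [collapseIdx, Fin.ext_iff]
  split_ifs <;> omega

theorem dist_sq_prod_pi {ι : Type*} [Fintype ι] {E : Type*} {G : ι → Type*}
    [SeminormedAddCommGroup E] [∀ i, SeminormedAddCommGroup (G i)]
    (x y : WithLp 2 (E × PiLp 2 G)) :
    dist x y ^ 2 = dist x.fst y.fst ^ 2 + ∑ i, dist (x.snd i) (y.snd i) ^ 2 := by
  rw [WithLp.prod_dist_eq_of_L2, Real.sq_sqrt (by positivity), PiLp.dist_eq_of_L2,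
    Real.sq_sqrt (by positivity)]

/-- The Frankl–Pach–Reiher–Rödl construction: in the product of a regular simplex `Δ`
(with `n` vertices, side `b`) with the regular simplices `Δ_{ij}` (with `n-1` vertices,
side `b_{ij}`, for the pairs `i < j` with `b_{ij} > 0`) one can choose affinely
independent points `z_1, …, z_n` projecting bijectively onto the vertices of `Δ` and
satisfying `‖z_s - z_t‖² = b² + ∑_{i<j} b_{ij}² - b_{st}²` for all `s ≠ t`. -/
theorem points_in_product_of_simplices
    (n : ℕ) (b : ℝ) (hb : 0 < b) (bij : Fin n → Fin n → ℝ)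
    (hbij : ∀ i j : Fin n, i < j → 0 ≤ bij i j)
    (v : Fin n → EuclideanSpace ℝ (Fin (n - 1)))
    (hvinj : Function.Injective v)
    (hv : ∀ s t, s ≠ t → dist (v s) (v t) = b)
    (w : Fin n → Fin n → Fin (n - 1) → EuclideanSpace ℝ (Fin (n - 2)))
    (hwinj : ∀ i j : Fin n, i < j → 0 < bij i j → Function.Injective (w i j))
    (hw : ∀ i j : Fin n, i < j → 0 < bij i j →
      ∀ k l, k ≠ l → dist (w i j k) (w i j l) = bij i j) :
    ∃ z : Fin n →
        WithLp 2 (EuclideanSpace ℝ (Fin (n - 1)) ×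
          PiLp 2 fun _ : {p : Fin n × Fin n // p.1 < p.2 ∧ 0 < bij p.1 p.2} =>
            EuclideanSpace ℝ (Fin (n - 2))),
      (∃ σ : Equiv.Perm (Fin n), ∀ s,
        ((WithLp.equiv 2 _) (z s)).1 = v (σ s)) ∧
      (∀ s, ∀ p : {p : Fin n × Fin n // p.1 < p.2 ∧ 0 < bij p.1 p.2},
        ((WithLp.equiv 2 _) (z s)).2 p ∈ Set.range (w p.1.1 p.1.2)) ∧
      (∀ s t, s ≠ t →
        dist (z s) (z t) ^ 2 =
          b ^ 2 + (∑ i : Fin n, ∑ j ∈ Finset.Ioi i, bij i j ^ 2)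
            - bij (min s t) (max s t) ^ 2) ∧
      AffineIndependent ℝ z := by
  set g : {p : Fin n × Fin n // p.1 < p.2 ∧ 0 < bij p.1 p.2} → Fin n → Fin (n - 1) :=
    fun p s => collapseIdx p.1.1 p.1.2 p.2.1 s with hgdef
  set z : Fin n →
      WithLp 2 (EuclideanSpace ℝ (Fin (n - 1)) ×
        PiLp 2 fun _ : {p : Fin n × Fin n // p.1 < p.2 ∧ 0 < bij p.1 p.2} =>
          EuclideanSpace ℝ (Fin (n - 2))) :=
    fun s => (WithLp.equiv 2 _).symm (v s, WithLp.toLp 2 fun p => w p.1.1 p.1.2 (g p s)) with hzdef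
  -- the total sum of squares
  have hsum : ∑ p : {p : Fin n × Fin n // p.1 < p.2 ∧ 0 < bij p.1 p.2}, bij p.1.1 p.1.2 ^ 2
      = ∑ i : Fin n, ∑ j ∈ Finset.Ioi i, bij i j ^ 2 := by
    have h1 : ∑ p : {p : Fin n × Fin n // p.1 < p.2 ∧ 0 < bij p.1 p.2}, bij p.1.1 p.1.2 ^ 2
        = ∑ p ∈ Finset.univ.filter (fun p : Fin n × Fin n => p.1 < p.2 ∧ 0 < bij p.1 p.2),
            bij p.1 p.2 ^ 2 :=
      (Finset.sum_subtype
        (p := fun p : Fin n × Fin n => p.1 < p.2 ∧ 0 < bij p.1 p.2)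
        (Finset.univ.filter fun p : Fin n × Fin n => p.1 < p.2 ∧ 0 < bij p.1 p.2)
        (fun x => by simp [Finset.mem_filter]) (fun p => bij p.1 p.2 ^ 2)).symm
    rw [h1, Finset.sum_filter, Fintype.sum_prod_type]
    apply Finset.sum_congr rfl
    intro i _
    rw [← Fintype.sum_ite_mem (Finset.Ioi i) (fun j => bij i j ^ 2)]
    apply Finset.sum_congr rfl
    intro j _
    by_cases hij : i < j
    · by_cases hpos : 0 < bij i j
      · simp [hij, hpos, Finset.mem_Ioi]
      · have hz0 : bij i j = 0 := le_antisymm (not_lt.mp hpos) (hbij i j hij)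
        simp [hij, hpos, Finset.mem_Ioi, hz0]
    · simp [hij, Finset.mem_Ioi]
  -- squared distance splits
  have hzd : ∀ s t : Fin n, dist (z s) (z t) ^ 2 =
      dist (v s) (v t) ^ 2 + ∑ p : {p : Fin n × Fin n // p.1 < p.2 ∧ 0 < bij p.1 p.2},
        dist (w p.1.1 p.1.2 (g p s)) (w p.1.1 p.1.2 (g p t)) ^ 2 :=
    fun s t => dist_sq_prod_pi (z s) (z t)
  -- main distance claim for s < t
  have claim : ∀ s t : Fin n, s < t → dist (z s) (z t) ^ 2 =
      b ^ 2 + (∑ i : Fin n, ∑ j ∈ Finset.Ioi i, bij i j ^ 2) - bij s t ^ 2 := by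
    intro s t hst
    have hstne : s ≠ t := ne_of_lt hst
    have hterm : ∀ p : {p : Fin n × Fin n // p.1 < p.2 ∧ 0 < bij p.1 p.2},
        dist (w p.1.1 p.1.2 (g p s)) (w p.1.1 p.1.2 (g p t)) ^ 2
        = bij p.1.1 p.1.2 ^ 2 - (if p.1 = (s, t) then bij s t ^ 2 else 0) := by
      intro p
      by_cases hp : p.1 = (s, t)
      · have hps : p.1.1 = s := by rw [hp]
        have hpt : p.1.2 = t := by rw [hp]
        have hgeq : g p s = g p t :=
          (collapseIdx_eq_iff p.1.1 p.1.2 p.2.1 s t hstne).mpr (Or.inl ⟨hps.symm, hpt.symm⟩)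
        rw [if_pos hp, hgeq, dist_self, hps, hpt]
        ring
      · have hne : g p s ≠ g p t := by
          intro h
          rcases (collapseIdx_eq_iff p.1.1 p.1.2 p.2.1 s t hstne).mp h with ⟨h1, h2⟩ | ⟨h1, h2⟩
          · exact hp (Prod.ext h1.symm h2.symm)
          · have h3 := p.2.1
            rw [← h1, ← h2] at h3
            exact absurd hst (asymm h3)
        rw [if_neg hp, hw p.1.1 p.1.2 p.2.1 p.2.2 _ _ hne, sub_zero]
    rw [hzd s t, hv s t hstne, Finset.sum_congr rfl fun p _ => hterm p,
      Finset.sum_sub_distrib, hsum]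
    have hifsum : ∑ p : {p : Fin n × Fin n // p.1 < p.2 ∧ 0 < bij p.1 p.2},
        (if p.1 = (s, t) then bij s t ^ 2 else 0) = bij s t ^ 2 := by
      by_cases hpos : 0 < bij s t
      · set q : {p : Fin n × Fin n // p.1 < p.2 ∧ 0 < bij p.1 p.2} := ⟨(s, t), hst, hpos⟩
          with hq
        have heq : ∀ p : {p : Fin n × Fin n // p.1 < p.2 ∧ 0 < bij p.1 p.2},
            (if p.1 = (s, t) then bij s t ^ 2 else 0) = (if p = q then bij s t ^ 2 else 0) := by
          intro p
          congr 1
          simp only [eq_iff_iff]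
          constructor
          · intro h; exact Subtype.ext h
          · intro h; rw [h]
        rw [Finset.sum_congr rfl fun p _ => heq p]
        rw [Fintype.sum_ite_eq' q (fun _ => bij s t ^ 2)]
      · have hz0 : bij s t = 0 := le_antisymm (not_lt.mp hpos) (hbij s t hst)
        have heq : ∀ p : {p : Fin n × Fin n // p.1 < p.2 ∧ 0 < bij p.1 p.2},
            (if p.1 = (s, t) then bij s t ^ 2 else 0) = 0 := by
          intro p
          rw [if_neg]
          intro h
          have h2 := p.2.2
          rw [h] at h2
          exact hpos h2
        rw [Finset.sum_congr rfl fun p _ => heq p, Finset.sum_const_zero, hz0]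
        ring
    rw [hifsum]
    ring
  refine ⟨z, ⟨Equiv.refl _, fun s => rfl⟩, fun s p => ⟨g p s, rfl⟩, ?_, ?_⟩
  · intro s t hst
    rcases hst.lt_or_gt with h | h
    · rw [min_eq_left h.le, max_eq_right h.le]
      exact claim s t h
    · rw [min_eq_right h.le, max_eq_left h.le, dist_comm]
      exact claim t s h
  · have hvind : AffineIndependent ℝ v := affineIndependent_of_equidist v hb hv
    refine AffineIndependent.of_comp
      ((LinearMap.fst ℝ (EuclideanSpace ℝ (Fin (n - 1)))
          (PiLp 2 fun _ : {p : Fin n × Fin n // p.1 < p.2 ∧ 0 < bij p.1 p.2} =>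
            EuclideanSpace ℝ (Fin (n - 2)))).comp
        (WithLp.linearEquiv 2 ℝ _).toLinearMap).toAffineMap ?_
    have hcomp : (((LinearMap.fst ℝ (EuclideanSpace ℝ (Fin (n - 1)))
          (PiLp 2 fun _ : {p : Fin n × Fin n // p.1 < p.2 ∧ 0 < bij p.1 p.2} =>
            EuclideanSpace ℝ (Fin (n - 2)))).comp
        (WithLp.linearEquiv 2 ℝ _).toLinearMap).toAffineMap ∘ z) = v := funext fun s => rfl
    rw [hcomp]
    exact hvind
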